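/- For a positive integer n, β, λ, u, c, t > 0, the series (βt)^{n-1} (uβ/(u+ct)) ∑_{m=0}^∞ (λ^m (u+ct)^m/m!) (βt)^{nm}/Γ(n(m+1)) + (βt)^n (cn/(u+ct)) ∑_{m=0}^∞ (λ^m(u+ct)^m/m!) (βt)^{nm}/Γ(n(m+1)+1) equals (β/(u+ct)) ((βt)^{n-1}/Γ(n)) [ u·₀F_n(1, 1+1/n, …, 1+(n−1)/n; Z) + ct·₀F_n(1+1/n, …, 1+n/n; Z) ] where Z = λ(u+ct)(βt)^n / n^n. -/

import Mathlib

open Real Finset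

/-- Pochhammer symbol. -/
noncomputable def poch (a : ℝ) (m : ℕ) : ℝ := ∏ k ∈ range m, (a + k)

/-- Generalised hypergeometric series `₀F_n(C₀, …, C_{n-1}; x)`. -/
noncomputable def F0n (n : ℕ) (C : ℕ → ℝ) (x : ℝ) : ℝ :=
  ∑' m : ℕ, x ^ m / ((∏ k ∈ range n, poch (C k) m) * (m.factorial : ℝ))

lemma poch_pos {a : ℝ} (ha : 0 < a) (m : ℕ) : 0 < poch a m :=
  Finset.prod_pos fun k _ => by positivity

lemma fac_add (a n : ℕ) :
    (((a + n).factorial : ℕ) : ℝ)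
      = (a.factorial : ℝ) * ∏ k ∈ range n, ((a : ℝ) + 1 + k) := by
  induction n with
  | zero => simp
  | succ n ih =>
    rw [← add_assoc, Nat.factorial_succ, prod_range_succ, ← mul_assoc, ← ih]
    push_cast; ring

lemma claim1 {n : ℕ} (hn : 0 < n) (m : ℕ) :
    ((n * m + (n - 1)).factorial : ℝ)
      = ((n - 1).factorial : ℝ) * (n : ℝ) ^ (n * m) *
        ∏ k ∈ range n, poch (1 + (k : ℝ) / n) m := by
  have hn' : (n : ℝ) ≠ 0 := Nat.cast_ne_zero.mpr hn.ne'
  induction m with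
  | zero => simp [poch]
  | succ m ih =>
    have h1 : n * (m + 1) + (n - 1) = (n * m + (n - 1)) + n := by ring
    have h2 : ∏ k ∈ range n, poch (1 + (k : ℝ) / n) (m + 1)
        = (∏ k ∈ range n, poch (1 + (k : ℝ) / n) m) *
          ∏ k ∈ range n, (1 + (k : ℝ) / n + m) := by
      rw [← prod_mul_distrib]
      exact prod_congr rfl fun k _ => by rw [poch, poch, prod_range_succ]
    have hcast : ((n * m + (n - 1) : ℕ) : ℝ) = (n : ℝ) * m + (n : ℝ) - 1 := by
      have h1 : (1 : ℕ) ≤ n := hn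
      push_cast [Nat.cast_sub h1]
      try ring
    have h3 : ∏ k ∈ range n, (((n * m + (n - 1) : ℕ) : ℝ) + 1 + k)
        = (n : ℝ) ^ n * ∏ k ∈ range n, (1 + (k : ℝ) / n + m) := by
      rw [show (n : ℝ) ^ n = ∏ _k ∈ range n, (n : ℝ) from by simp, ← prod_mul_distrib]
      refine prod_congr rfl fun k _ => ?_
      rw [hcast]
      field_simp
      ring
    rw [h1, fac_add, ih, h2, h3, Nat.mul_succ, pow_add]
    ring

lemma claim2 {n : ℕ} (hn : 0 < n) (m : ℕ) :
    ((n * m + n).factorial : ℝ)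
      = (n.factorial : ℝ) * (n : ℝ) ^ (n * m) *
        ∏ k ∈ range n, poch (1 + ((k : ℝ) + 1) / n) m := by
  have hn' : (n : ℝ) ≠ 0 := Nat.cast_ne_zero.mpr hn.ne'
  induction m with
  | zero => simp [poch]
  | succ m ih =>
    have h1 : n * (m + 1) + n = (n * m + n) + n := by ring
    have h2 : ∏ k ∈ range n, poch (1 + ((k : ℝ) + 1) / n) (m + 1)
        = (∏ k ∈ range n, poch (1 + ((k : ℝ) + 1) / n) m) *
          ∏ k ∈ range n, (1 + ((k : ℝ) + 1) / n + m) := by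
      rw [← prod_mul_distrib]
      exact prod_congr rfl fun k _ => by rw [poch, poch, prod_range_succ]
    have h3 : ∏ k ∈ range n, (((n * m + n : ℕ) : ℝ) + 1 + k)
        = (n : ℝ) ^ n * ∏ k ∈ range n, (1 + ((k : ℝ) + 1) / n + m) := by
      rw [show (n : ℝ) ^ n = ∏ _k ∈ range n, (n : ℝ) from by simp, ← prod_mul_distrib]
      refine prod_congr rfl fun k _ => ?_
      push_cast
      field_simp
      ring
    rw [h1, fac_add, ih, h2, h3, Nat.mul_succ, pow_add]
    ring

/-- The ruin-time density series for Gamma(n, β) inter-claim times (ordinary renewal case,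
`n` a positive integer) equals the closed form in terms of `₀F_n`. -/
theorem gamma_density_closed_form (n : ℕ) (hn : 0 < n) (β lam u c t : ℝ)
    (hβ : 0 < β) (hlam : 0 < lam) (hu : 0 < u) (hc : 0 < c) (ht : 0 < t) :
    (β * t) ^ (n - 1) * (u * β / (u + c * t)) *
        (∑' m : ℕ, lam ^ m * (u + c * t) ^ m / (m.factorial : ℝ) *
          ((β * t) ^ (n * m) / Gamma ((n : ℝ) * (m + 1))))
      + (β * t) ^ n * (c * n / (u + c * t)) *
        (∑' m : ℕ, lam ^ m * (u + c * t) ^ m / (m.factorial : ℝ) *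
          ((β * t) ^ (n * m) / Gamma ((n : ℝ) * (m + 1) + 1)))
      = (β / (u + c * t)) * ((β * t) ^ (n - 1) / Gamma n) *
          (u * F0n n (fun k => 1 + (k : ℝ) / n) (lam * (u + c * t) * (β * t) ^ n / n ^ n)
            + c * t * F0n n (fun k => 1 + ((k : ℝ) + 1) / n)
                (lam * (u + c * t) * (β * t) ^ n / n ^ n)) := by
  have hn' : (n : ℝ) ≠ 0 := Nat.cast_ne_zero.mpr hn.ne'
  have hS : (0 : ℝ) < u + c * t := by positivity
  have hbt : (0 : ℝ) < β * t := by positivity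
  set Z : ℝ := lam * (u + c * t) * (β * t) ^ n / n ^ n with hZ
  -- Gamma n = (n-1)!
  have hGn : Gamma (n : ℝ) = ((n - 1).factorial : ℝ) := by
    have : (n : ℝ) = ((n - 1 : ℕ) : ℝ) + 1 := by
      have : (1 : ℕ) ≤ n := hn
      push_cast [Nat.cast_sub this]; ring
    rw [this, Real.Gamma_nat_eq_factorial]
  have hfac1 : ∀ m : ℕ, Gamma ((n : ℝ) * (m + 1)) = ((n * m + (n - 1)).factorial : ℝ) := by
    intro m
    have : (n : ℝ) * (m + 1) = ((n * m + (n - 1) : ℕ) : ℝ) + 1 := by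
      have h1 : (1 : ℕ) ≤ n := hn
      push_cast [Nat.cast_sub h1]; ring
    rw [this, Real.Gamma_nat_eq_factorial]
  have hfac2 : ∀ m : ℕ, Gamma ((n : ℝ) * (m + 1) + 1) = ((n * m + n).factorial : ℝ) := by
    intro m
    have : (n : ℝ) * (m + 1) + 1 = ((n * m + n : ℕ) : ℝ) + 1 := by push_cast; ring
    rw [this, Real.Gamma_nat_eq_factorial]
  have hZpow : ∀ m : ℕ, Z ^ m
      = lam ^ m * (u + c * t) ^ m * (β * t) ^ (n * m) / (n : ℝ) ^ (n * m) := by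
    intro m
    rw [hZ, div_pow, mul_pow, mul_pow, ← pow_mul, ← pow_mul]
  -- term identities
  have hterm1 : ∀ m : ℕ,
      lam ^ m * (u + c * t) ^ m / (m.factorial : ℝ) *
        ((β * t) ^ (n * m) / Gamma ((n : ℝ) * (m + 1)))
      = (((n - 1).factorial : ℝ))⁻¹ *
          (Z ^ m / ((∏ k ∈ range n, poch (1 + (k : ℝ) / n) m) * (m.factorial : ℝ))) := by
    intro m
    rw [hfac1 m, claim1 hn m, hZpow m]
    have hp : (0 : ℝ) < ∏ k ∈ range n, poch (1 + (k : ℝ) / n) m :=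
      Finset.prod_pos fun k _ => poch_pos (by positivity) m
    have hf : ((n - 1).factorial : ℝ) ≠ 0 := Nat.cast_ne_zero.mpr (Nat.factorial_ne_zero _)
    ring
  have hterm2 : ∀ m : ℕ,
      lam ^ m * (u + c * t) ^ m / (m.factorial : ℝ) *
        ((β * t) ^ (n * m) / Gamma ((n : ℝ) * (m + 1) + 1))
      = ((n.factorial : ℝ))⁻¹ *
          (Z ^ m / ((∏ k ∈ range n, poch (1 + ((k : ℝ) + 1) / n) m) * (m.factorial : ℝ))) := by
    intro m
    rw [hfac2 m, claim2 hn m, hZpow m]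
    have hp : (0 : ℝ) < ∏ k ∈ range n, poch (1 + ((k : ℝ) + 1) / n) m :=
      Finset.prod_pos fun k _ => poch_pos (by positivity) m
    have hf : ((n.factorial : ℕ) : ℝ) ≠ 0 := Nat.cast_ne_zero.mpr (Nat.factorial_ne_zero _)
    ring
  have hsum1 : (∑' m : ℕ, lam ^ m * (u + c * t) ^ m / (m.factorial : ℝ) *
        ((β * t) ^ (n * m) / Gamma ((n : ℝ) * (m + 1))))
      = (((n - 1).factorial : ℝ))⁻¹ * F0n n (fun k => 1 + (k : ℝ) / n) Z := by
    rw [F0n, ← tsum_mul_left]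
    exact tsum_congr hterm1
  have hsum2 : (∑' m : ℕ, lam ^ m * (u + c * t) ^ m / (m.factorial : ℝ) *
        ((β * t) ^ (n * m) / Gamma ((n : ℝ) * (m + 1) + 1)))
      = ((n.factorial : ℝ))⁻¹ * F0n n (fun k => 1 + ((k : ℝ) + 1) / n) Z := by
    rw [F0n, ← tsum_mul_left]
    exact tsum_congr hterm2
  rw [hsum1, hsum2, hGn]
  have hpow : (β * t) ^ n = (β * t) ^ (n - 1) * (β * t) := by
    conv_lhs => rw [show n = (n - 1) + 1 by omega]
    rw [pow_succ]
  have hnf : (n.factorial : ℝ) = (n : ℝ) * ((n - 1).factorial : ℝ) := by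
    conv_lhs => rw [show n = (n - 1) + 1 by omega]
    rw [Nat.factorial_succ]
    push_cast
    congr 1
    have : (1 : ℕ) ≤ n := hn
    push_cast [Nat.cast_sub this]; ring
  rw [hpow, hnf]
  have hf : ((n - 1).factorial : ℝ) ≠ 0 := Nat.cast_ne_zero.mpr (Nat.factorial_ne_zero _)
  field_simp
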